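/- (Proposition 1) Suppose y_1,…,y_n are independent random variables with E y_i = γ'(x_{i·}ᵀ β°) for a convex differentiable γ: ℝ → ℝ, and ε_i = y_i − E y_i are σ-subgaussian. Let a ∈ (0,1), α ∈ (0,1), and set λ² = 2 a^{-2} σ² x_W² log(2p/α). Let β̂ be a (measurable) random vector that almost surely minimizes β ↦ ℓ(β) + λ Σ_{k=1}^r ‖W_k β_k‖ over ℝ^p, and assume ζ_{a,W} > 0. Then with probability at least 1 − α, |β̂ − β°|_∞² / σ² ≤ 2 (1 + a)² a^{-2} x_W² ζ_{a,W}^{-2} log(2p/α). -/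

import Mathlib

open MeasureTheory ProbabilityTheory
open scoped BigOperators ENNReal Classical

/-- The group norm `‖W_k β_k‖`. -/
noncomputable def groupNorm {r : ℕ} {p : Fin r → ℕ}
    (w β : ((k : Fin r) × Fin (p k)) → ℝ) (k : Fin r) : ℝ :=
  Real.sqrt (∑ j : Fin (p k), (w ⟨k, j⟩ * β ⟨k, j⟩) ^ 2)

/-- The sup norm `|v|_∞`. -/
noncomputable def supNorm {ι : Type*} [Fintype ι] (v : ι → ℝ) : ℝ := ⨆ c, |v c|

/-- The inner product `x_{i·}ᵀ β` of the `i`-th row of the design `X` with `β`. -/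
def dotRow {n r : ℕ} {p : Fin r → ℕ}
    (X : Fin n → ((k : Fin r) × Fin (p k)) → ℝ) (i : Fin n)
    (β : ((k : Fin r) × Fin (p k)) → ℝ) : ℝ :=
  ∑ c, X i c * β c

/-- The Euclidean norm `‖x_{j,k}‖` of column `c = (j,k)` of `X`. -/
noncomputable def colNorm {n r : ℕ} {p : Fin r → ℕ}
    (X : Fin n → ((k : Fin r) × Fin (p k)) → ℝ) (c : (k : Fin r) × Fin (p k)) : ℝ :=
  Real.sqrt (∑ i, (X i c) ^ 2)

/-- `x_W = max_{j,k} ‖x_{j,k}‖ / w_{j,k}`. -/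
noncomputable def xW {n r : ℕ} {p : Fin r → ℕ}
    (X : Fin n → ((k : Fin r) × Fin (p k)) → ℝ)
    (w : ((k : Fin r) × Fin (p k)) → ℝ) : ℝ :=
  ⨆ c, colNorm X c / w c

/-- The negative log-likelihood loss `ℓ(β) = ∑_i [γ(x_{i·}ᵀβ) − y_i x_{i·}ᵀβ]`
(at sample point `ω`). -/
noncomputable def loss {Ω : Type*} {n r : ℕ} {p : Fin r → ℕ}
    (X : Fin n → ((k : Fin r) × Fin (p k)) → ℝ) (γ : ℝ → ℝ)
    (y : Fin n → Ω → ℝ) (ω : Ω) (β : ((k : Fin r) × Fin (p k)) → ℝ) : ℝ :=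
  ∑ i, (γ (dotRow X i β) - y i ω * dotRow X i β)

/-- Coordinate `c` of `∇ℓ(β° + ν) − ∇ℓ(β°)`, which does not depend on `y`:
`∑_i (γ'(x_{i·}ᵀ(β°+ν)) − γ'(x_{i·}ᵀβ°)) x_{i,c}`. -/
noncomputable def gradDiff {n r : ℕ} {p : Fin r → ℕ}
    (X : Fin n → ((k : Fin r) × Fin (p k)) → ℝ) (γ : ℝ → ℝ)
    (βo ν : ((k : Fin r) × Fin (p k)) → ℝ) (c : (k : Fin r) × Fin (p k)) : ℝ :=
  ∑ i, (deriv γ (dotRow X i (βo + ν)) - deriv γ (dotRow X i βo)) * X i c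

/-- Membership in the cone `C_{a,W}` where `S = {k : βo_k ≠ 0}`. -/
def InCone {r : ℕ} {p : Fin r → ℕ}
    (βo w : ((k : Fin r) × Fin (p k)) → ℝ) (a : ℝ)
    (v : ((k : Fin r) × Fin (p k)) → ℝ) : Prop :=
  ∑ k : Fin r, (if ∀ j : Fin (p k), βo ⟨k, j⟩ = 0 then groupNorm w v k else 0)
    ≤ ∑ k : Fin r, (if ∀ j : Fin (p k), βo ⟨k, j⟩ = 0 then 0 else groupNorm w v k)
      + a * ∑ c, |w c * v c|

/-- The Cone Invertibility Factor
`ζ_{a,W} = inf_{0 ≠ ν ∈ C_{a,W}} |W⁻¹(∇ℓ(β°+ν) − ∇ℓ(β°))|_∞ / |ν|_∞`. -/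
noncomputable def cif {n r : ℕ} {p : Fin r → ℕ}
    (X : Fin n → ((k : Fin r) × Fin (p k)) → ℝ) (γ : ℝ → ℝ)
    (βo w : ((k : Fin r) × Fin (p k)) → ℝ) (a : ℝ) : ℝ :=
  sInf {z : ℝ | ∃ ν : ((k : Fin r) × Fin (p k)) → ℝ, ν ≠ 0 ∧ InCone βo w a ν ∧
    z = supNorm (fun c => gradDiff X γ βo ν c / w c) / supNorm ν}



section AuxLemmas

open Filter Real

/-! ### Generic analysis helpers -/

theorem aux_kkt {φ : ℝ → ℝ} {D K : ℝ} (hφ : HasDerivAt φ D 0)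
    (h : ∀ t, φ 0 ≤ φ t + K * |t|) : |D| ≤ K := by
  have hs := hasDerivAt_iff_tendsto_slope.mp hφ
  rw [abs_le]
  constructor
  · have h1 : Tendsto (slope φ 0) (nhdsWithin 0 (Set.Ioi 0)) (nhds D) :=
      hs.mono_left (nhdsWithin_mono _ (fun x hx => ne_of_gt hx))
    refine ge_of_tendsto h1 ?_
    filter_upwards [self_mem_nhdsWithin] with t ht
    have ht' : (0:ℝ) < t := ht
    have h2 := h t
    rw [abs_of_pos ht'] at h2
    rw [slope_def_field, sub_zero, le_div_iff₀ ht']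
    nlinarith
  · have h1 : Tendsto (slope φ 0) (nhdsWithin 0 (Set.Iio 0)) (nhds D) :=
      hs.mono_left (nhdsWithin_mono _ (fun x hx => ne_of_lt hx))
    refine le_of_tendsto h1 ?_
    filter_upwards [self_mem_nhdsWithin] with t ht
    have ht' : t < (0:ℝ) := ht
    have h2 := h t
    rw [abs_of_neg ht'] at h2
    rw [slope_def_field, sub_zero, div_le_iff_of_neg ht']
    nlinarith

theorem aux_tangent {γ : ℝ → ℝ} (hc : ConvexOn ℝ Set.univ γ) (hd : Differentiable ℝ γ)
    (x y : ℝ) : deriv γ x * (y - x) ≤ γ y - γ x := by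
  rcases lt_trichotomy x y with hxy | hxy | hxy
  · have h1 := hc.deriv_le_slope (Set.mem_univ x) (Set.mem_univ y) hxy (hd x)
    rw [slope_def_field] at h1
    exact (le_div_iff₀ (sub_pos.mpr hxy)).mp h1
  · simp [hxy]
  · have h1 := hc.slope_le_deriv (Set.mem_univ y) (Set.mem_univ x) hxy (hd x)
    rw [slope_def_field] at h1
    have h2 := (div_le_iff₀ (sub_pos.mpr hxy)).mp h1
    have h0 : deriv γ x * (y - x) = -(deriv γ x * (x - y)) := by ring
    linarith

theorem aux_sqrt_tri (m : ℕ) (f g : Fin m → ℝ) :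
    Real.sqrt (∑ j, (f j + g j)^2) ≤ Real.sqrt (∑ j, (f j)^2) + Real.sqrt (∑ j, (g j)^2) := by
  have h := norm_add_le (E := EuclideanSpace ℝ (Fin m)) ((WithLp.equiv 2 _).symm f)
    ((WithLp.equiv 2 _).symm g)
  rw [EuclideanSpace.norm_eq, EuclideanSpace.norm_eq, EuclideanSpace.norm_eq] at h
  simpa [WithLp.equiv_symm_apply, PiLp.toLp_apply, Real.norm_eq_abs, sq_abs] using h

/-! ### groupNorm lemmas -/

variable {n r : ℕ} {p : Fin r → ℕ}

theorem groupNorm_nonneg (w β : ((k : Fin r) × Fin (p k)) → ℝ) (k : Fin r) :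
    0 ≤ groupNorm w β k := Real.sqrt_nonneg _

theorem groupNorm_congr {w β₁ β₂ : ((k : Fin r) × Fin (p k)) → ℝ} {k : Fin r}
    (h : ∀ j : Fin (p k), β₁ ⟨k, j⟩ = β₂ ⟨k, j⟩) :
    groupNorm w β₁ k = groupNorm w β₂ k := by
  unfold groupNorm
  congr 1
  exact Finset.sum_congr rfl fun j _ => by rw [h j]

theorem groupNorm_add_le (w β₁ β₂ : ((k : Fin r) × Fin (p k)) → ℝ) (k : Fin r) :
    groupNorm w (β₁ + β₂) k ≤ groupNorm w β₁ k + groupNorm w β₂ k := by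
  unfold groupNorm
  have := aux_sqrt_tri (p k) (fun j => w ⟨k, j⟩ * β₁ ⟨k, j⟩) (fun j => w ⟨k, j⟩ * β₂ ⟨k, j⟩)
  simpa [mul_add] using this

theorem groupNorm_neg (w β : ((k : Fin r) × Fin (p k)) → ℝ) (k : Fin r) :
    groupNorm w (-β) k = groupNorm w β k := by
  unfold groupNorm
  congr 1
  exact Finset.sum_congr rfl fun j _ => by simp [Pi.neg_apply]

theorem abs_groupNorm_sub_le (w β d : ((k : Fin r) × Fin (p k)) → ℝ) (k : Fin r) :
    |groupNorm w (β + d) k - groupNorm w β k| ≤ groupNorm w d k := by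
  rw [abs_sub_le_iff]
  constructor
  · have := groupNorm_add_le w β d k
    linarith
  · have h1 := groupNorm_add_le w (β + d) (-d) k
    have h2 : groupNorm w (β + d + -d) k = groupNorm w β k := by
      apply groupNorm_congr; intro j; simp
    rw [h2, groupNorm_neg] at h1
    linarith

theorem groupNorm_zero_of (w β : ((k : Fin r) × Fin (p k)) → ℝ) (k : Fin r)
    (h : ∀ j : Fin (p k), β ⟨k, j⟩ = 0) : groupNorm w β k = 0 := by
  unfold groupNorm
  rw [Finset.sum_eq_zero fun j _ => by rw [h j]; ring]
  exact Real.sqrt_zero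

/-! ### supNorm lemmas -/

theorem supNorm_nonneg {ι : Type*} [Fintype ι] (v : ι → ℝ) : 0 ≤ supNorm v :=
  Real.iSup_nonneg fun c => abs_nonneg _

theorem abs_le_supNorm {ι : Type*} [Fintype ι] (v : ι → ℝ) (c : ι) : |v c| ≤ supNorm v :=
  le_ciSup (f := fun c => |v c|) (Set.Finite.bddAbove (Set.finite_range _)) c

theorem supNorm_le {ι : Type*} [Fintype ι] {v : ι → ℝ} {M : ℝ} (hM : 0 ≤ M)
    (h : ∀ c, |v c| ≤ M) : supNorm v ≤ M := Real.iSup_le h hM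

theorem supNorm_pos {ι : Type*} [Fintype ι] {v : ι → ℝ} (hv : v ≠ 0) : 0 < supNorm v := by
  obtain ⟨c, hc⟩ := Function.ne_iff.mp hv
  calc 0 < |v c| := abs_pos.mpr hc
    _ ≤ supNorm v := abs_le_supNorm v c

end AuxLemmas


section Deterministic

variable {n r : ℕ} {p : Fin r → ℕ}

theorem dotRow_add (X : Fin n → ((k : Fin r) × Fin (p k)) → ℝ) (i : Fin n)
    (β d : ((k : Fin r) × Fin (p k)) → ℝ) :
    dotRow X i (β + d) = dotRow X i β + dotRow X i d := by
  simp [dotRow, mul_add, Finset.sum_add_distrib]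

theorem dotRow_smul (X : Fin n → ((k : Fin r) × Fin (p k)) → ℝ) (i : Fin n)
    (t : ℝ) (d : ((k : Fin r) × Fin (p k)) → ℝ) :
    dotRow X i (t • d) = t * dotRow X i d := by
  simp [dotRow, Finset.mul_sum, mul_left_comm]

theorem dotRow_single (X : Fin n → ((k : Fin r) × Fin (p k)) → ℝ) (i : Fin n)
    (c : (k : Fin r) × Fin (p k)) :
    dotRow X i (Pi.single c 1) = X i c := by
  simp [dotRow, Pi.single_apply]

/-- The deterministic core of Proposition 1. -/
theorem det_bound [Nonempty ((k : Fin r) × Fin (p k))]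
    (X : Fin n → ((k : Fin r) × Fin (p k)) → ℝ) (γ : ℝ → ℝ)
    (hγconv : ConvexOn ℝ Set.univ γ) (hγdiff : Differentiable ℝ γ)
    (yv : Fin n → ℝ) (βo βh w : ((k : Fin r) × Fin (p k)) → ℝ) (hw : ∀ c, 0 < w c)
    (a lam : ℝ) (ha : 0 < a) (hlam : 0 < lam)
    (hζ : 0 < cif X γ βo w a)
    (hmin : ∀ β, (∑ i, (γ (dotRow X i βh) - yv i * dotRow X i βh))
        + lam * ∑ k : Fin r, groupNorm w βh k
      ≤ (∑ i, (γ (dotRow X i β) - yv i * dotRow X i β)) + lam * ∑ k : Fin r, groupNorm w β k)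
    (hev : ∀ c, |∑ i, (deriv γ (dotRow X i βo) - yv i) * X i c| ≤ a * lam * w c) :
    supNorm (fun c => βh c - βo c) ≤ (1 + a) * lam / cif X γ βo w a := by
  classical
  set ν : ((k : Fin r) × Fin (p k)) → ℝ := fun c => βh c - βo c with hν
  by_cases hν0 : ν = 0
  · have hz : supNorm ν = 0 := by
      rw [show ν = fun _ => (0:ℝ) from funext fun c => by rw [hν0]; rfl]
      simp [supNorm]
    rw [hz]
    positivity
  have hβν : βo + ν = βh := funext fun c => by simp [hν]
  set G : (((k : Fin r) × Fin (p k)) → ℝ) → ((k : Fin r) × Fin (p k)) → ℝ :=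
    fun β c => ∑ i, (deriv γ (dotRow X i β) - yv i) * X i c with hG
  -- Step A : KKT bound |G βh c| ≤ lam * w c
  have hkkt : ∀ c, |G βh c| ≤ lam * w c := by
    intro c
    set e : ((k : Fin r) × Fin (p k)) → ℝ := Pi.single c 1 with he
    set A : Fin n → ℝ := fun i => dotRow X i βh with hA
    set B : Fin n → ℝ := fun i => X i c with hB
    set φ : ℝ → ℝ := fun t => ∑ i, (γ (A i + t * B i) - yv i * (A i + t * B i)) with hφ
    have hline : ∀ t i, dotRow X i (βh + t • e) = A i + t * B i := by
      intro t i
      rw [dotRow_add, dotRow_smul, dotRow_single]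
    have hder : HasDerivAt φ (G βh c) 0 := by
      have hterm : ∀ i : Fin n, HasDerivAt (fun t => γ (A i + t * B i) - yv i * (A i + t * B i))
          ((deriv γ (A i) - yv i) * B i) 0 := by
        intro i
        have h1 : HasDerivAt (fun t : ℝ => A i + t * B i) (B i) 0 := by
          simpa using ((hasDerivAt_id (0:ℝ)).mul_const (B i)).const_add (A i)
        have h2 : HasDerivAt (fun t => γ (A i + t * B i)) (deriv γ (A i) * B i) 0 := by
          have := ((hγdiff (A i + 0 * B i)).hasDerivAt).comp 0 h1
          simpa [Function.comp_def] using this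
        have h3 : HasDerivAt (fun t => yv i * (A i + t * B i)) (yv i * B i) 0 :=
          h1.const_mul (yv i)
        simpa [sub_mul, Pi.sub_def] using h2.sub h3
      have := HasDerivAt.fun_sum (fun i (_ : i ∈ Finset.univ) => hterm i)
      simpa [hφ, hG] using this
    have hineq : ∀ t, φ 0 ≤ φ t + (lam * w c) * |t| := by
      intro t
      have hm := hmin (βh + t • e)
      have hl0 : ∀ i, dotRow X i βh = A i + 0 * B i := by intro i; simp [hA]
      have hpen : ∑ k : Fin r, groupNorm w (βh + t • e) k
          ≤ (∑ k : Fin r, groupNorm w βh k) + w c * |t| := by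
        have hsingle : groupNorm w (t • e) c.1 = w c * |t| := by
          unfold groupNorm
          have hsum : ∑ j : Fin (p c.1), (w ⟨c.1, j⟩ * (t • e) ⟨c.1, j⟩)^2
              = (w c * t)^2 := by
            obtain ⟨k0, j0⟩ := c
            rw [Finset.sum_eq_single j0]
            · simp [he, Pi.single_apply]
            · intro j _ hj
              have hne2 : (⟨k0, j⟩ : (k : Fin r) × Fin (p k)) ≠ ⟨k0, j0⟩ := by
                intro h
                exact hj (eq_of_heq (Sigma.mk.inj_iff.mp h).2)
              simp [he, Pi.single_apply, hne2]
            · intro h; exact absurd (Finset.mem_univ _) h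
          rw [hsum, Real.sqrt_sq_eq_abs, abs_mul, abs_of_pos (hw c)]
        have hkey : ∀ k : Fin r, groupNorm w (βh + t • e) k - groupNorm w βh k
            ≤ (if k = c.1 then w c * |t| else 0) := by
          intro k
          by_cases hk : k = c.1
          · subst hk
            rw [if_pos rfl]
            have hag := abs_groupNorm_sub_le w βh (t • e) c.1
            rw [← hsingle]
            exact (abs_le.mp hag).2
          · rw [if_neg hk]
            have : groupNorm w (βh + t • e) k = groupNorm w βh k := by
              apply groupNorm_congr
              intro j
              have hne : (⟨k, j⟩ : (k : Fin r) × Fin (p k)) ≠ c := by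
                intro h; exact hk (congrArg Sigma.fst h)
              simp [he, Pi.single_apply, hne]
            linarith
        have hss := Finset.sum_le_sum fun k (_ : k ∈ Finset.univ) => hkey k
        rw [Finset.sum_sub_distrib] at hss
        have hsum2 : (∑ k : Fin r, if k = c.1 then w c * |t| else 0) = w c * |t| := by simp
        rw [hsum2] at hss
        linarith
      calc φ 0 = ∑ i, (γ (dotRow X i βh) - yv i * dotRow X i βh) := by
            simp [hφ, hA]
        _ ≤ (∑ i, (γ (dotRow X i (βh + t • e)) - yv i * dotRow X i (βh + t • e)))
            + lam * ((∑ k : Fin r, groupNorm w (βh + t • e) k)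
              - ∑ k : Fin r, groupNorm w βh k) := by
            have := hmin (βh + t • e); linarith
        _ ≤ φ t + (lam * w c) * |t| := by
            have h1 : ∑ i, (γ (dotRow X i (βh + t • e)) - yv i * dotRow X i (βh + t • e))
                = φ t := by
              simp only [hφ]
              exact Finset.sum_congr rfl fun i _ => by rw [hline t i]
            rw [h1]
            have h2 : lam * ((∑ k : Fin r, groupNorm w (βh + t • e) k)
                - ∑ k : Fin r, groupNorm w βh k) ≤ lam * (w c * |t|) := by
              apply mul_le_mul_of_nonneg_left _ hlam.le
              linarith [hpen]
            linarith [h2]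
    exact aux_kkt hder hineq
  -- Step B : event bound
  have hevb : ∀ c, |G βo c| ≤ a * lam * w c := hev
  -- Step D : cone membership
  have hcone : InCone βo w a ν := by
    have hconv : (∑ i, (γ (dotRow X i βo) - yv i * dotRow X i βo))
        - (∑ i, (γ (dotRow X i βh) - yv i * dotRow X i βh))
        ≤ a * lam * ∑ c, |w c * ν c| := by
      have h1 : ∑ c, G βo c * ν c
          ≤ (∑ i, (γ (dotRow X i βh) - yv i * dotRow X i βh))
            - (∑ i, (γ (dotRow X i βo) - yv i * dotRow X i βo)) := by
        have hterm : ∀ i : Fin n, (deriv γ (dotRow X i βo) - yv i) * dotRow X i ν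
            ≤ (γ (dotRow X i βh) - yv i * dotRow X i βh)
              - (γ (dotRow X i βo) - yv i * dotRow X i βo) := by
          intro i
          have htan := aux_tangent hγconv hγdiff (dotRow X i βo) (dotRow X i βh)
          have hdr : dotRow X i βh = dotRow X i βo + dotRow X i ν := by
            rw [← hβν, dotRow_add]
          have hAd : dotRow X i ν = dotRow X i βh - dotRow X i βo := by linarith
          rw [hAd]
          nlinarith [htan]
        have hsum := Finset.sum_le_sum fun i (_ : i ∈ Finset.univ) => hterm i
        have hswap : ∑ i, (deriv γ (dotRow X i βo) - yv i) * dotRow X i ν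
            = ∑ c, G βo c * ν c := by
          simp only [dotRow, hG, Finset.mul_sum, Finset.sum_mul]
          rw [Finset.sum_comm]
          exact Finset.sum_congr rfl fun c _ => Finset.sum_congr rfl fun i _ => by ring
        rw [hswap] at hsum
        calc ∑ c, G βo c * ν c ≤ _ := hsum
          _ = _ := by rw [Finset.sum_sub_distrib]
      have h2 : -(a * lam * ∑ c, |w c * ν c|) ≤ ∑ c, G βo c * ν c := by
        have : ∀ c, -(a * lam * |w c * ν c|) ≤ G βo c * ν c := by
          intro c
          have habs : |G βo c * ν c| ≤ a * lam * |w c * ν c| := by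
            rw [abs_mul, abs_mul, abs_of_pos (hw c)]
            calc |G βo c| * |ν c| ≤ (a * lam * w c) * |ν c| :=
                mul_le_mul_of_nonneg_right (hevb c) (abs_nonneg _)
              _ = a * lam * (w c * |ν c|) := by ring
          linarith [neg_abs_le (G βo c * ν c)]
        have := Finset.sum_le_sum fun c (_ : c ∈ Finset.univ) => this c
        simpa [Finset.mul_sum, Finset.sum_neg_distrib] using this
      linarith
    have hm0 := hmin βo
    have hpen2 : (∑ k : Fin r, groupNorm w βh k) - (∑ k : Fin r, groupNorm w βo k)
        ≤ a * ∑ c, |w c * ν c| := by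
      have : lam * ((∑ k : Fin r, groupNorm w βh k) - ∑ k : Fin r, groupNorm w βo k)
          ≤ lam * (a * ∑ c, |w c * ν c|) := by
        calc lam * ((∑ k : Fin r, groupNorm w βh k) - ∑ k : Fin r, groupNorm w βo k)
            ≤ (∑ i, (γ (dotRow X i βo) - yv i * dotRow X i βo))
              - (∑ i, (γ (dotRow X i βh) - yv i * dotRow X i βh)) := by linarith
          _ ≤ a * lam * ∑ c, |w c * ν c| := hconv
          _ = lam * (a * ∑ c, |w c * ν c|) := by ring
      exact le_of_mul_le_mul_left (by linarith) hlam
    have hkterm : ∀ k : Fin r,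
        (if ∀ j : Fin (p k), βo ⟨k, j⟩ = 0 then groupNorm w ν k else 0)
          - (if ∀ j : Fin (p k), βo ⟨k, j⟩ = 0 then 0 else groupNorm w ν k)
        ≤ groupNorm w βh k - groupNorm w βo k := by
      intro k
      by_cases hk : ∀ j : Fin (p k), βo ⟨k, j⟩ = 0
      · rw [if_pos hk, if_pos hk]
        have h1 : groupNorm w βh k = groupNorm w ν k :=
          groupNorm_congr fun j => by simp [hν, hk j]
        have h2 : groupNorm w βo k = 0 := groupNorm_zero_of w βo k hk
        rw [h1, h2]
      · rw [if_neg hk, if_neg hk]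
        have := abs_groupNorm_sub_le w βo ν k
        rw [hβν] at this
        have := (abs_le.mp this).1
        linarith
    have hsum := Finset.sum_le_sum fun k (_ : k ∈ Finset.univ) => hkterm k
    rw [Finset.sum_sub_distrib, Finset.sum_sub_distrib] at hsum
    unfold InCone
    linarith
  -- Step C : gradDiff identity and bound
  have hgd : ∀ c, gradDiff X γ βo ν c = G βh c - G βo c := by
    intro c
    unfold gradDiff
    rw [hβν, hG]
    rw [← Finset.sum_sub_distrib]
    exact Finset.sum_congr rfl fun i _ => by ring
  have hgdb : supNorm (fun c => gradDiff X γ βo ν c / w c) ≤ (1 + a) * lam := by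
    apply supNorm_le (by positivity)
    intro c
    rw [abs_div, abs_of_pos (hw c), div_le_iff₀ (hw c)]
    rw [hgd c]
    calc |G βh c - G βo c| ≤ |G βh c| + |G βo c| := abs_sub _ _
      _ ≤ lam * w c + a * lam * w c := add_le_add (hkkt c) (hevb c)
      _ = (1 + a) * lam * w c := by ring
  -- Step E : conclude via the CIF
  have hmem : supNorm (fun c => gradDiff X γ βo ν c / w c) / supNorm ν
      ∈ {z : ℝ | ∃ ν' : ((k : Fin r) × Fin (p k)) → ℝ, ν' ≠ 0 ∧ InCone βo w a ν' ∧
        z = supNorm (fun c => gradDiff X γ βo ν' c / w c) / supNorm ν'} :=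
    ⟨ν, hν0, hcone, rfl⟩
  have hbdd : BddBelow {z : ℝ | ∃ ν' : ((k : Fin r) × Fin (p k)) → ℝ, ν' ≠ 0 ∧
      InCone βo w a ν' ∧
      z = supNorm (fun c => gradDiff X γ βo ν' c / w c) / supNorm ν'} := by
    refine ⟨0, fun z hz => ?_⟩
    obtain ⟨ν', _, _, rfl⟩ := hz
    exact div_nonneg (supNorm_nonneg _) (supNorm_nonneg _)
  have hcif : cif X γ βo w a ≤ supNorm (fun c => gradDiff X γ βo ν c / w c) / supNorm ν :=
    csInf_le hbdd hmem
  have hsν : 0 < supNorm ν := supNorm_pos hν0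
  have hfin : cif X γ βo w a * supNorm ν ≤ (1 + a) * lam := by
    calc cif X γ βo w a * supNorm ν
        ≤ (supNorm (fun c => gradDiff X γ βo ν c / w c) / supNorm ν) * supNorm ν :=
          mul_le_mul_of_nonneg_right hcif hsν.le
      _ = supNorm (fun c => gradDiff X γ βo ν c / w c) := by field_simp
      _ ≤ (1 + a) * lam := hgdb
  rw [le_div_iff₀ hζ]
  calc supNorm ν * cif X γ βo w a = cif X γ βo w a * supNorm ν := by ring
    _ ≤ (1 + a) * lam := hfin

end Deterministic


section Chernoff

theorem aux_int_mgf {Ω : Type*} [MeasurableSpace Ω] (P : Measure Ω) [IsProbabilityMeasure P]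
    (f : Ω → ℝ) (hf : Measurable f) (B : ℝ)
    (h : ∫⁻ ω, ENNReal.ofReal (Real.exp (f ω)) ∂P ≤ ENNReal.ofReal (Real.exp B)) :
    Integrable (fun ω => Real.exp (f ω)) P ∧ ∫ ω, Real.exp (f ω) ∂P ≤ Real.exp B := by
  have hmeas : Measurable fun ω => Real.exp (f ω) := hf.exp
  have hfin : HasFiniteIntegral (fun ω => Real.exp (f ω)) P := by
    show (∫⁻ ω, ‖Real.exp (f ω)‖₊ ∂P) < ⊤
    have heq : ∀ ω, (‖Real.exp (f ω)‖₊ : ℝ≥0∞) = ENNReal.ofReal (Real.exp (f ω)) :=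
      fun ω => Real.enorm_eq_ofReal (Real.exp_nonneg _)
    simp_rw [heq]
    exact lt_of_le_of_lt h ENNReal.ofReal_lt_top
  refine ⟨⟨hmeas.aestronglyMeasurable, hfin⟩, ?_⟩
  rw [integral_eq_lintegral_of_nonneg_ae
    (Filter.Eventually.of_forall fun ω => Real.exp_nonneg _) hmeas.aestronglyMeasurable]
  exact ENNReal.toReal_le_of_le_ofReal (Real.exp_nonneg B) h

theorem aux_chernoff {Ω : Type*} [MeasurableSpace Ω] {n : ℕ} (P : Measure Ω)
    [IsProbabilityMeasure P]
    (ε : Fin n → Ω → ℝ) (hmeas : ∀ i, Measurable (ε i))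
    (hindep : iIndepFun ε P)
    (σ : ℝ) (hσ : 0 < σ)
    (hsub : ∀ i u, ∫⁻ ω, ENNReal.ofReal (Real.exp (u * ε i ω)) ∂P
      ≤ ENNReal.ofReal (Real.exp (σ^2 * u^2 / 2)))
    (b : Fin n → ℝ) (t : ℝ) (ht : 0 < t) (hB : 0 < ∑ i, (b i)^2) :
    P {ω | t ≤ ∑ i, b i * ε i ω}
      ≤ ENNReal.ofReal (Real.exp (-(t^2) / (2 * σ^2 * (∑ i, (b i)^2)))) := by
  classical
  set B2 := ∑ i, (b i)^2 with hB2
  set s : ℝ := t / (σ^2 * B2) with hs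
  have hs0 : 0 < s := div_pos ht (by positivity)
  set Xf : Fin n → Ω → ℝ := fun i ω => b i * ε i ω with hXf
  have hXmeas : ∀ i, Measurable (Xf i) := fun i => (hmeas i).const_mul (b i)
  have hXindep : iIndepFun Xf P :=
    hindep.comp (fun i (x : ℝ) => b i * x) (fun i => measurable_id.const_mul (b i))
  have hi : ∀ i : Fin n, Integrable (fun ω => Real.exp (s * Xf i ω)) P ∧
      ∫ ω, Real.exp (s * Xf i ω) ∂P ≤ Real.exp (σ^2 * (s * b i)^2 / 2) := by
    intro i
    have h1 := hsub i (s * b i)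
    have h2 : ∀ ω, (s * b i) * ε i ω = s * Xf i ω := fun ω => by simp [hXf]; ring
    simp_rw [h2] at h1
    exact aux_int_mgf P (fun ω => s * Xf i ω) (((hXmeas i).const_mul s)) _ h1
  have hint : Integrable (fun ω => Real.exp (s * (∑ i ∈ Finset.univ, Xf i) ω)) P :=
    hXindep.integrable_exp_mul_sum hXmeas (fun i _ => (hi i).1)
  have hcher := measure_ge_le_exp_mul_mgf (μ := P) (X := ∑ i ∈ Finset.univ, Xf i)
    t hs0.le hint
  rw [hXindep.mgf_sum hXmeas Finset.univ] at hcher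
  have hprod : ∏ i, mgf (Xf i) P s ≤ ∏ i, Real.exp (σ^2 * (s * b i)^2 / 2) :=
    Finset.prod_le_prod (fun i _ => mgf_nonneg) (fun i _ => (hi i).2)
  have hexp : ∏ i, Real.exp (σ^2 * (s * b i)^2 / 2)
      = Real.exp (σ^2 * s^2 * B2 / 2) := by
    rw [← Real.exp_sum]
    congr 1
    have : ∀ i : Fin n, σ^2 * (s * b i)^2 / 2 = (σ^2 * s^2 / 2) * (b i)^2 :=
      fun i => by ring
    rw [Finset.sum_congr rfl (fun i _ => this i), ← Finset.mul_sum, ← hB2]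
    ring
  have hfinal : (P {ω | t ≤ (∑ i ∈ Finset.univ, Xf i) ω}).toReal
      ≤ Real.exp (-(t^2) / (2 * σ^2 * B2)) := by
    calc (P {ω | t ≤ (∑ i ∈ Finset.univ, Xf i) ω}).toReal
        ≤ Real.exp (-s * t) * ∏ i, mgf (Xf i) P s := hcher
      _ ≤ Real.exp (-s * t) * Real.exp (σ^2 * s^2 * B2 / 2) := by
          rw [← hexp]
          exact mul_le_mul_of_nonneg_left hprod (Real.exp_nonneg _)
      _ = Real.exp (-s * t + σ^2 * s^2 * B2 / 2) := by rw [← Real.exp_add]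
      _ = Real.exp (-(t^2) / (2 * σ^2 * B2)) := by
          congr 1
          rw [hs]
          have hσB : σ^2 * B2 ≠ 0 := by positivity
          field_simp
          ring
  have hset : {ω | t ≤ (∑ i ∈ Finset.univ, Xf i) ω} = {ω | t ≤ ∑ i, b i * ε i ω} := by
    ext ω
    simp [Finset.sum_apply, hXf]
  rw [hset] at hfinal
  exact (ENNReal.le_ofReal_iff_toReal_le (measure_ne_top P _) (Real.exp_nonneg _)).mpr hfinal

end Chernoff

/-- Proposition 1: with `λ² = 2a⁻²σ²x_W² log(2p/α)`, with probability at least `1 − α`,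
`|β̂ − β°|_∞² / σ² ≤ 2(1+a)² a⁻² x_W² ζ_{a,W}⁻² log(2p/α)`. -/
theorem glamer_proposition1
    {Ω : Type*} [MeasurableSpace Ω] (P : Measure Ω) [IsProbabilityMeasure P]
    {n r : ℕ} {p : Fin r → ℕ}
    (X : Fin n → ((k : Fin r) × Fin (p k)) → ℝ)
    (γ : ℝ → ℝ) (hγconv : ConvexOn ℝ Set.univ γ) (hγdiff : Differentiable ℝ γ)
    (y : Fin n → Ω → ℝ) (hymeas : ∀ i, Measurable (y i))
    (hindep : iIndepFun y P)
    (βo : ((k : Fin r) × Fin (p k)) → ℝ)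
    (hmean : ∀ i, ∫ ω, y i ω ∂P = deriv γ (dotRow X i βo))
    (σ : ℝ) (hσ : 0 < σ)
    (hsub : ∀ i, ∀ u : ℝ,
      ∫⁻ ω, ENNReal.ofReal (Real.exp (u * (y i ω - ∫ ω', y i ω' ∂P))) ∂P
        ≤ ENNReal.ofReal (Real.exp (σ ^ 2 * u ^ 2 / 2)))
    (w : ((k : Fin r) × Fin (p k)) → ℝ) (hw : ∀ c, 0 < w c)
    (a : ℝ) (ha : a ∈ Set.Ioo (0 : ℝ) 1) (α : ℝ) (hα : α ∈ Set.Ioo (0 : ℝ) 1)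
    (lam : ℝ) (hlam : 0 < lam)
    (hlam2 : lam ^ 2 = 2 * σ ^ 2 * (xW X w) ^ 2 *
      Real.log (2 * (Fintype.card ((k : Fin r) × Fin (p k))) / α) / a ^ 2)
    (βhat : Ω → ((k : Fin r) × Fin (p k)) → ℝ) (hβhat : Measurable βhat)
    (hmin : ∀ᵐ ω ∂P, ∀ β : ((k : Fin r) × Fin (p k)) → ℝ,
      loss X γ y ω (βhat ω) + lam * ∑ k : Fin r, groupNorm w (βhat ω) k
        ≤ loss X γ y ω β + lam * ∑ k : Fin r, groupNorm w β k)
    (hζ : 0 < cif X γ βo w a) :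
    ENNReal.ofReal (1 - α) ≤
      P {ω | supNorm (fun c => βhat ω c - βo c) ^ 2 / σ ^ 2
        ≤ 2 * (1 + a) ^ 2 * (xW X w) ^ 2 *
          Real.log (2 * (Fintype.card ((k : Fin r) × Fin (p k))) / α) /
            (a ^ 2 * (cif X γ βo w a) ^ 2)} := by
  classical
  set pc : ℕ := Fintype.card ((k : Fin r) × Fin (p k)) with hpc
  set L : ℝ := Real.log (2 * pc / α) with hLdef
  have hσ2 : (0:ℝ) < σ^2 := by positivity
  have ha0 : 0 < a := ha.1
  have ha2 : (0:ℝ) < a^2 := by positivity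
  have hxW0 : 0 ≤ xW X w := Real.iSup_nonneg fun c => div_nonneg (Real.sqrt_nonneg _) (hw c).le
  have hlampos : (0:ℝ) < lam^2 := by positivity
  have h6 : 0 < 2 * σ^2 * (xW X w)^2 * L := by
    have h1 : (0:ℝ) < 2 * σ^2 * (xW X w)^2 * L / a^2 := hlam2 ▸ hlampos
    have h2 := mul_pos h1 ha2
    rwa [div_mul_cancel₀ _ (ne_of_gt ha2)] at h2
  have hx2L : 0 < (xW X w)^2 * L := by
    by_contra h
    push_neg at h
    nlinarith
  have hxW : 0 < xW X w := by
    rcases hxW0.lt_or_eq with h | h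
    · exact h
    · exfalso; rw [← h] at hx2L; simp at hx2L
  have hL0 : 0 < L := by nlinarith [sq_nonneg (xW X w)]
  have hne : Nonempty ((k : Fin r) × Fin (p k)) := by
    by_contra hemp
    rw [not_nonempty_iff] at hemp
    have : xW X w = 0 := by
      unfold xW
      exact Real.iSup_of_isEmpty _
    rw [this] at hxW; exact lt_irrefl 0 hxW
  have hcard : 0 < pc := Fintype.card_pos
  have hcary : (0:ℝ) < 2 * pc / α := by
    have : (0:ℝ) < (pc:ℝ) := by exact_mod_cast hcard
    have := hα.1
    positivity
  -- centered errors
  set m : Fin n → ℝ := fun i => deriv γ (dotRow X i βo) with hm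
  set ε : Fin n → Ω → ℝ := fun i ω => y i ω - m i with hε
  have hεmeas : ∀ i, Measurable (ε i) := fun i => (hymeas i).sub measurable_const
  have hεindep : iIndepFun ε P :=
    hindep.comp (fun i (v : ℝ) => v - m i) (fun i => measurable_id.sub measurable_const)
  have hεsub : ∀ i u, ∫⁻ ω, ENNReal.ofReal (Real.exp (u * ε i ω)) ∂P
      ≤ ENNReal.ofReal (Real.exp (σ^2 * u^2 / 2)) := by
    intro i u
    have := hsub i u
    simp_rw [hmean i] at this
    simp only [hε, hm]
    exact this
  set Z : ((k : Fin r) × Fin (p k)) → Ω → ℝ := fun c ω => ∑ i, X i c * ε i ω with hZ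
  set tc : ((k : Fin r) × Fin (p k)) → ℝ := fun c => a * lam * w c with htc
  have htcpos : ∀ c, 0 < tc c := fun c =>
    mul_pos (mul_pos ha.1 hlam) (hw c)
  -- per-coordinate tail bounds
  have htail : ∀ c : ((k : Fin r) × Fin (p k)), P {ω | tc c ≤ Z c ω} ≤ ENNReal.ofReal (Real.exp (-L)) ∧
      P {ω | tc c ≤ -(Z c ω)} ≤ ENNReal.ofReal (Real.exp (-L)) := by
    intro c
    by_cases hcol : (∑ i, (X i c)^2) = 0
    · have hzero : ∀ i : Fin n, X i c = 0 := by
        intro i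
        have := (Finset.sum_eq_zero_iff_of_nonneg (fun j _ => sq_nonneg (X j c))).mp hcol
          i (Finset.mem_univ i)
        exact pow_eq_zero_iff (n := 2) (by norm_num) |>.mp this
      have hZ0 : ∀ ω, Z c ω = 0 := fun ω => by
        simp only [hZ]
        exact Finset.sum_eq_zero fun i _ => by rw [hzero i]; ring
      have hempty : ∀ (f : Ω → ℝ), (∀ ω, f ω = 0) → P {ω | tc c ≤ f ω} = 0 := by
        intro f hf
        have hemp2 : {ω | tc c ≤ f ω} = ∅ := by
          apply Set.eq_empty_iff_forall_notMem.mpr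
          intro ω hω
          have hω' : tc c ≤ f ω := hω
          rw [hf ω] at hω'
          exact absurd hω' (not_le.mpr (htcpos c))
        rw [hemp2]; simp
      constructor
      · exact le_trans (le_of_eq (hempty (Z c) hZ0)) zero_le
      · exact le_trans (le_of_eq (hempty (fun ω => -(Z c ω))
          (fun ω => by show -(Z c ω) = (0:ℝ); rw [hZ0 ω]; ring))) zero_le
    · have hB2 : 0 < ∑ i, (X i c)^2 :=
        lt_of_le_of_ne (Finset.sum_nonneg fun i _ => sq_nonneg _) (Ne.symm hcol)
      -- column norm bound
      have hcolle : Real.sqrt (∑ i, (X i c)^2) ≤ xW X w * w c := by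
        have h1 : colNorm X c / w c ≤ xW X w :=
          le_ciSup (f := fun c => colNorm X c / w c)
            (Set.Finite.bddAbove (Set.finite_range _)) c
        have := (div_le_iff₀ (hw c)).mp h1
        simpa [colNorm] using this
      have hB2le : (∑ i, (X i c)^2) ≤ (xW X w)^2 * (w c)^2 := by
        have h0 : (0:ℝ) ≤ ∑ i, (X i c)^2 := Finset.sum_nonneg fun i _ => sq_nonneg _
        have h1 : Real.sqrt (∑ i, (X i c)^2) ^ 2 ≤ (xW X w * w c)^2 :=
          pow_le_pow_left₀ (Real.sqrt_nonneg _) hcolle 2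
        rw [Real.sq_sqrt h0] at h1
        calc (∑ i, (X i c)^2) ≤ (xW X w * w c)^2 := h1
          _ = (xW X w)^2 * (w c)^2 := by ring
      have hexple : ∀ B2 : ℝ, 0 < B2 → B2 ≤ (xW X w)^2 * (w c)^2 →
          Real.exp (-(tc c ^2) / (2 * σ^2 * B2)) ≤ Real.exp (-L) := by
        intro B2 hB2p hB2l
        apply Real.exp_le_exp.mpr
        rw [neg_div, neg_le_neg_iff]
        rw [le_div_iff₀ (by positivity)]
        have hal : a^2 * lam^2 = 2 * σ^2 * (xW X w)^2 * L := by
          rw [hlam2]; field_simp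
        have htcsq : tc c ^ 2 = 2 * σ^2 * (xW X w)^2 * L * (w c)^2 := by
          simp only [htc]
          calc (a * lam * w c)^2 = a^2 * lam^2 * (w c)^2 := by ring
            _ = 2 * σ^2 * (xW X w)^2 * L * (w c)^2 := by rw [hal]
        rw [htcsq]
        calc L * (2 * σ^2 * B2) ≤ L * (2 * σ^2 * ((xW X w)^2 * (w c)^2)) := by
              apply mul_le_mul_of_nonneg_left _ hL0.le
              nlinarith
          _ = 2 * σ^2 * (xW X w)^2 * L * (w c)^2 := by ring
      constructor
      · have h := aux_chernoff P ε hεmeas hεindep σ hσ hεsub (fun i => X i c)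
          (tc c) (htcpos c) hB2
        exact h.trans (ENNReal.ofReal_le_ofReal (hexple _ hB2 hB2le))
      · have hB2' : 0 < ∑ i, (-(X i c))^2 := by simpa [neg_sq] using hB2
        have h := aux_chernoff P ε hεmeas hεindep σ hσ hεsub (fun i => -(X i c))
          (tc c) (htcpos c) hB2'
        have hset : {ω | tc c ≤ ∑ i, -(X i c) * ε i ω} = {ω | tc c ≤ -(Z c ω)} := by
          ext ω
          simp only [Set.mem_setOf_eq, hZ]
          rw [show ∑ i, -(X i c) * ε i ω = -∑ i, X i c * ε i ω by
            rw [← Finset.sum_neg_distrib]; exact Finset.sum_congr rfl fun i _ => by ring]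
        rw [hset] at h
        refine h.trans (ENNReal.ofReal_le_ofReal ?_)
        have := hexple _ hB2 hB2le
        simpa [neg_sq] using hexple _ (by simpa [neg_sq] using hB2)
          (by simpa [neg_sq] using hB2le)
    -- end tail
  -- the good event
  set E : Set Ω := ⋂ c : ((k : Fin r) × Fin (p k)), {ω | |Z c ω| ≤ tc c} with hE
  have hZmeas : ∀ c, Measurable (Z c) := by
    intro c
    apply Finset.measurable_sum
    intro i _
    exact (hεmeas i).const_mul _
  have hEmeas : MeasurableSet E := by
    apply MeasurableSet.iInter
    intro c
    exact measurableSet_le ((hZmeas c).abs) measurable_const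
  have hEcompl : P Eᶜ ≤ ENNReal.ofReal α := by
    have hsub1 : Eᶜ ⊆ ⋃ c : ((k : Fin r) × Fin (p k)), ({ω | tc c ≤ Z c ω} ∪ {ω | tc c ≤ -(Z c ω)}) := by
      intro ω hω
      simp only [hE, Set.compl_iInter, Set.mem_iUnion] at hω
      obtain ⟨c, hc⟩ := hω
      simp only [Set.mem_compl_iff, Set.mem_setOf_eq, not_le] at hc
      refine Set.mem_iUnion.mpr ⟨c, ?_⟩
      rcases abs_cases (Z c ω) with ⟨habs, _⟩ | ⟨habs, _⟩
      · refine Or.inl ?_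
        show tc c ≤ Z c ω
        rw [← habs]; exact hc.le
      · refine Or.inr ?_
        show tc c ≤ -(Z c ω)
        rw [← habs]; exact hc.le
    calc P Eᶜ ≤ P (⋃ c : ((k : Fin r) × Fin (p k)), ({ω | tc c ≤ Z c ω} ∪ {ω | tc c ≤ -(Z c ω)})) :=
          measure_mono hsub1
      _ ≤ ∑ c : ((k : Fin r) × Fin (p k)), P ({ω | tc c ≤ Z c ω} ∪ {ω | tc c ≤ -(Z c ω)}) :=
          measure_iUnion_fintype_le _ _
      _ ≤ ∑ _c : ((k : Fin r) × Fin (p k)), (ENNReal.ofReal (Real.exp (-L)) + ENNReal.ofReal (Real.exp (-L))) := by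
          apply Finset.sum_le_sum
          intro c _
          calc P ({ω | tc c ≤ Z c ω} ∪ {ω | tc c ≤ -(Z c ω)})
              ≤ P {ω | tc c ≤ Z c ω} + P {ω | tc c ≤ -(Z c ω)} := measure_union_le _ _
            _ ≤ _ := add_le_add (htail c).1 (htail c).2
      _ = (pc : ℝ≥0∞) * (ENNReal.ofReal (Real.exp (-L)) + ENNReal.ofReal (Real.exp (-L))) := by
          rw [Finset.sum_const, nsmul_eq_mul]
          rfl
      _ = ENNReal.ofReal ((pc : ℝ) * (2 * Real.exp (-L))) := by
          rw [← ENNReal.ofReal_add (Real.exp_nonneg _) (Real.exp_nonneg _),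
            ← ENNReal.ofReal_natCast pc,
            ← ENNReal.ofReal_mul (by positivity)]
          congr 1
          ring
      _ = ENNReal.ofReal α := by
          congr 1
          rw [hLdef, Real.exp_neg, Real.exp_log hcary]
          field_simp
  have hPE : ENNReal.ofReal (1 - α) ≤ P E := by
    have hsum : P E + P Eᶜ = 1 := by
      rw [measure_add_measure_compl hEmeas, measure_univ]
    have h1 : ENNReal.ofReal (1 - α) + ENNReal.ofReal α = 1 := by
      rw [← ENNReal.ofReal_add (by linarith [hα.2]) hα.1.le]
      norm_num
    have h2 : ENNReal.ofReal (1 - α) + ENNReal.ofReal α ≤ P E + ENNReal.ofReal α := by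
      rw [h1, ← hsum]
      exact add_le_add_right hEcompl _
    exact (ENNReal.add_le_add_iff_right ENNReal.ofReal_ne_top).mp h2
  -- minimality event
  set Q : Set Ω := {ω | ∀ β : ((k : Fin r) × Fin (p k)) → ℝ,
      loss X γ y ω (βhat ω) + lam * ∑ k : Fin r, groupNorm w (βhat ω) k
        ≤ loss X γ y ω β + lam * ∑ k : Fin r, groupNorm w β k} with hQ
  have hQnull : P Qᶜ = 0 := by
    have hQae : ∀ᵐ ω ∂P, ω ∈ Q := hmin
    have h := ae_iff.mp hQae
    rw [Set.compl_def]
    exact h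
  -- conclusion set
  set G : Set Ω := {ω | supNorm (fun c => βhat ω c - βo c) ^ 2 / σ ^ 2
      ≤ 2 * (1 + a) ^ 2 * (xW X w) ^ 2 *
        Real.log (2 * (Fintype.card ((k : Fin r) × Fin (p k))) / α) / (a ^ 2 * (cif X γ βo w a) ^ 2)} with hGdef
  have hEQsub : E ∩ Q ⊆ G := by
    rintro ω ⟨hωE, hωQ⟩
    have hev : ∀ c : ((k : Fin r) × Fin (p k)), |∑ i, (deriv γ (dotRow X i βo) - y i ω) * X i c|
        ≤ a * lam * w c := by
      intro c
      have hmemE : ω ∈ {ω | |Z c ω| ≤ tc c} := Set.mem_iInter.mp hωE c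
      have heq : ∑ i, (deriv γ (dotRow X i βo) - y i ω) * X i c = -(Z c ω) := by
        simp only [hZ, hε, hm]
        rw [← Finset.sum_neg_distrib]
        exact Finset.sum_congr rfl fun i _ => by ring
      rw [heq, abs_neg]
      exact hmemE
    have hminω : ∀ β : ((k : Fin r) × Fin (p k)) → ℝ,
        (∑ i, (γ (dotRow X i (βhat ω)) - y i ω * dotRow X i (βhat ω)))
          + lam * ∑ k : Fin r, groupNorm w (βhat ω) k
        ≤ (∑ i, (γ (dotRow X i β) - y i ω * dotRow X i β))
          + lam * ∑ k : Fin r, groupNorm w β k := by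
      intro β
      have := hωQ β
      simpa [loss] using this
    have hdet := det_bound X γ hγconv hγdiff (fun i => y i ω) βo (βhat ω) w hw
      a lam ha0 hlam hζ hminω hev
    have hs0 : 0 ≤ supNorm (fun c => βhat ω c - βo c) := supNorm_nonneg _
    have hsq : supNorm (fun c => βhat ω c - βo c) ^ 2
        ≤ ((1 + a) * lam / cif X γ βo w a) ^ 2 := pow_le_pow_left₀ hs0 hdet 2
    have hR : ((1 + a) * lam / cif X γ βo w a) ^ 2 / σ ^ 2
        = 2 * (1 + a) ^ 2 * (xW X w) ^ 2 * L / (a ^ 2 * (cif X γ βo w a) ^ 2) := by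
      have hζne : cif X γ βo w a ≠ 0 := ne_of_gt hζ
      have hane : a ≠ 0 := ne_of_gt ha0
      have hσne : σ ≠ 0 := ne_of_gt hσ
      rw [div_pow, mul_pow, hlam2]
      field_simp
    show supNorm (fun c => βhat ω c - βo c) ^ 2 / σ ^ 2
        ≤ 2 * (1 + a) ^ 2 * (xW X w) ^ 2 * Real.log (2 * (Fintype.card ((k : Fin r) × Fin (p k))) / α)
          / (a ^ 2 * (cif X γ βo w a) ^ 2)
    calc supNorm (fun c => βhat ω c - βo c) ^ 2 / σ ^ 2
        ≤ ((1 + a) * lam / cif X γ βo w a) ^ 2 / σ ^ 2 := by gcongr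
      _ = 2 * (1 + a) ^ 2 * (xW X w) ^ 2 * L / (a ^ 2 * (cif X γ βo w a) ^ 2) := hR
      _ = _ := by rw [hLdef]
  calc ENNReal.ofReal (1 - α) ≤ P E := hPE
    _ ≤ P ((E ∩ Q) ∪ Qᶜ) := measure_mono fun ω hω => by
        by_cases hq : ω ∈ Q
        · exact Or.inl ⟨hω, hq⟩
        · exact Or.inr hq
    _ ≤ P (E ∩ Q) + P Qᶜ := measure_union_le _ _
    _ = P (E ∩ Q) := by rw [hQnull, add_zero]
    _ ≤ P G := measure_mono hEQsub
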